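/- arXiv:1504.06817 — 3 statements merged into one kernel-verified Lean document; each statement's English description precedes it below -/
import Mathlib

section
/- (Deterministic bound on ‖P_{T⊥}(B_*)‖_*, first half of Theorem 1.) Let λ > 0, ε ≥ 0, β > 1, and let Ω be a finite multiset of s index pairs from [m]×[n]. Let A_r ∈ ℝ^{m×n} satisfy P_T(A_r) = A_r, and let B ∈ ℝ^{m×n}. Set Γ = 2 s ε²/(m n) + 3 m n r log(2n) λ²/(8s). Assume: (i) (1/2)·⟨R_Ω(A_r − B), A_r − B⟩ + (λ/2)·‖P_{T⊥}(B)‖_* ≤ λ·√(r/(2n))·‖P_T(A_r − B)‖_F + Γ; (ii) the linear map (mn/s)·P_T∘R_Ω∘P_T − P_T on ℝ^{m×n} has operator norm at most 1/2 with respect to the Frobenius norm; (iii) R_Ω has operator norm at most (8/3)·√β·log(n) with respect to the Frobenius norm; (iv) (8 log(n)/3)·√(r m β/s) ≤ 1/4. Then ‖P_{T⊥}(B)‖_F ≤ ‖P_{T⊥}(B)‖_* ≤ 8 s ε²/(m n λ) + 3 m n r log(2n) λ/s. -/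
open scoped BigOperators
open Matrix
open MeasureTheory

namespace MC

variable {m n r s : ℕ}

/-- Trace inner product `⟨X,Y⟩ = trace(Xᵀ Y)`. -/
def ip (A B : Matrix (Fin m) (Fin n) ℝ) : ℝ := ∑ i, ∑ j, A i j * B i j

/-- Frobenius norm. -/
noncomputable def fro (A : Matrix (Fin m) (Fin n) ℝ) : ℝ := Real.sqrt (ip A A)

/-- Largest absolute value of an entry. -/
noncomputable def infNorm (A : Matrix (Fin m) (Fin n) ℝ) : ℝ := ⨆ i, ⨆ j, |A i j|

/-- Nuclear norm: sum of singular values. -/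
noncomputable def nuclearNorm (A : Matrix (Fin m) (Fin n) ℝ) : ℝ :=
  ∑ j, Real.sqrt ((Matrix.isHermitian_conjTranspose_mul_self A).eigenvalues j)

/-- Spectral norm: largest singular value. -/
noncomputable def specNorm (A : Matrix (Fin m) (Fin n) ℝ) : ℝ :=
  ⨆ j, Real.sqrt ((Matrix.isHermitian_conjTranspose_mul_self A).eigenvalues j)

/-- Sampling operator for a multiset of index pairs. -/
def RΩ (Ω : Multiset (Fin m × Fin n)) (Z : Matrix (Fin m) (Fin n) ℝ) :
    Matrix (Fin m) (Fin n) ℝ :=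
  Matrix.of fun i j => (Ω.count (i, j)) * Z i j

def PT (U : Matrix (Fin m) (Fin r) ℝ) (V : Matrix (Fin n) (Fin r) ℝ)
    (Z : Matrix (Fin m) (Fin n) ℝ) : Matrix (Fin m) (Fin n) ℝ :=
  U * Uᵀ * Z + Z * (V * Vᵀ) - U * Uᵀ * Z * (V * Vᵀ)

def PTperp (U : Matrix (Fin m) (Fin r) ℝ) (V : Matrix (Fin n) (Fin r) ℝ)
    (Z : Matrix (Fin m) (Fin n) ℝ) : Matrix (Fin m) (Fin n) ℝ :=
  (1 - U * Uᵀ) * Z * (1 - V * Vᵀ)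

/-- Objective of nuclear-norm regularized least squares. -/
noncomputable def obj (Ω : Multiset (Fin m × Fin n)) (A : Matrix (Fin m) (Fin n) ℝ)
    (lam : ℝ) (B : Matrix (Fin m) (Fin n) ℝ) : ℝ :=
  (1 / 2) * (Ω.map fun p => (B p.1 p.2 - A p.1 p.2) ^ 2).sum + lam * nuclearNorm B

/-- Uniform probability measure on index pairs. -/
noncomputable def unifPair (m n : ℕ) : Measure (Fin m × Fin n) :=
  (Fintype.card (Fin m × Fin n) : ENNReal)⁻¹ • Measure.count

/-- Law of `s` i.i.d. uniform index pairs. -/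
noncomputable def sampleMeasure (m n s : ℕ) : Measure (Fin s → Fin m × Fin n) :=
  Measure.pi fun _ => unifPair m n

/-- The multiset of sampled indices. -/
def toMS (ω : Fin s → Fin m × Fin n) : Multiset (Fin m × Fin n) :=
  Multiset.map ω Finset.univ.val

/-! ### Auxiliary lemmas -/

lemma ip_self_nonneg (A : Matrix (Fin m) (Fin n) ℝ) : 0 ≤ ip A A :=
  Finset.sum_nonneg fun _ _ => Finset.sum_nonneg fun _ _ => mul_self_nonneg _

lemma fro_nonneg (A : Matrix (Fin m) (Fin n) ℝ) : 0 ≤ fro A := Real.sqrt_nonneg _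

lemma fro_sq (A : Matrix (Fin m) (Fin n) ℝ) : fro A ^ 2 = ip A A :=
  Real.sq_sqrt (ip_self_nonneg A)

lemma ip_eq_sum_prod (A B : Matrix (Fin m) (Fin n) ℝ) :
    ip A B = ∑ p : Fin m × Fin n, A p.1 p.2 * B p.1 p.2 := by
  rw [ip, ← Finset.univ_product_univ, Finset.sum_product]

lemma ip_cauchy (A B : Matrix (Fin m) (Fin n) ℝ) : ip A B ≤ fro A * fro B := by
  rw [ip_eq_sum_prod, fro, fro, ip_eq_sum_prod, ip_eq_sum_prod]
  have h := Real.sum_mul_le_sqrt_mul_sqrt (Finset.univ : Finset (Fin m × Fin n))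
    (fun p => A p.1 p.2) (fun p => B p.1 p.2)
  simpa [pow_two] using h

lemma ip_eq_trace (A B : Matrix (Fin m) (Fin n) ℝ) : ip A B = (Aᵀ * B).trace := by
  rw [ip, Matrix.trace]
  simp only [Matrix.diag, Matrix.mul_apply, Matrix.transpose_apply]
  exact Finset.sum_comm

lemma ip_mul_left (M : Matrix (Fin m) (Fin m) ℝ) (A B : Matrix (Fin m) (Fin n) ℝ) :
    ip (M * A) B = ip A (Mᵀ * B) := by
  rw [ip_eq_trace, ip_eq_trace, Matrix.transpose_mul, Matrix.mul_assoc]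

lemma ip_mul_right (M : Matrix (Fin n) (Fin n) ℝ) (A B : Matrix (Fin m) (Fin n) ℝ) :
    ip (A * M) B = ip A (B * Mᵀ) := by
  rw [ip_eq_trace, ip_eq_trace, Matrix.transpose_mul, Matrix.mul_assoc,
    Matrix.trace_mul_comm, Matrix.mul_assoc]

lemma ip_add_left (A B C : Matrix (Fin m) (Fin n) ℝ) : ip (A + B) C = ip A C + ip B C := by
  simp [ip, add_mul, Finset.sum_add_distrib]

lemma ip_sub_left (A B C : Matrix (Fin m) (Fin n) ℝ) : ip (A - B) C = ip A C - ip B C := by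
  simp [ip, sub_mul, Finset.sum_sub_distrib]

lemma ip_smul_left (c : ℝ) (A B : Matrix (Fin m) (Fin n) ℝ) : ip (c • A) B = c * ip A B := by
  simp [ip, Matrix.smul_apply, smul_eq_mul, Finset.mul_sum, mul_assoc]

lemma ip_neg_left (A B : Matrix (Fin m) (Fin n) ℝ) : ip (-A) B = - ip A B := by
  simp [ip, Finset.sum_neg_distrib]

lemma fro_neg (A : Matrix (Fin m) (Fin n) ℝ) : fro (-A) = fro A := by
  unfold fro; congr 1; simp [ip]

lemma ip_add_right (A B C : Matrix (Fin m) (Fin n) ℝ) : ip A (B + C) = ip A B + ip A C := by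
  simp [ip, mul_add, Finset.sum_add_distrib]

lemma ip_sub_right (A B C : Matrix (Fin m) (Fin n) ℝ) : ip A (B - C) = ip A B - ip A C := by
  simp [ip, mul_sub, Finset.sum_sub_distrib]

section PTlemmas
variable (U : Matrix (Fin m) (Fin r) ℝ) (V : Matrix (Fin n) (Fin r) ℝ)

lemma PT_add_PTperp (Z : Matrix (Fin m) (Fin n) ℝ) : PT U V Z + PTperp U V Z = Z := by
  unfold PT PTperp
  simp only [Matrix.sub_mul, Matrix.mul_sub, Matrix.one_mul, Matrix.mul_one]
  abel

lemma PTperp_sub (A B : Matrix (Fin m) (Fin n) ℝ) :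
    PTperp U V (A - B) = PTperp U V A - PTperp U V B := by
  unfold PTperp
  simp only [Matrix.mul_sub, Matrix.sub_mul]
  abel

lemma PT_PT (hUo : Uᵀ * U = 1) (hVo : Vᵀ * V = 1) (Z : Matrix (Fin m) (Fin n) ℝ) :
    PT U V (PT U V Z) = PT U V Z := by
  have hU' : ∀ {k : ℕ} (X : Matrix (Fin r) (Fin k) ℝ), Uᵀ * (U * X) = X := by
    intro k X; rw [← Matrix.mul_assoc, hUo, Matrix.one_mul]
  have hV' : ∀ {k : ℕ} (X : Matrix (Fin r) (Fin k) ℝ), Vᵀ * (V * X) = X := by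
    intro k X; rw [← Matrix.mul_assoc, hVo, Matrix.one_mul]
  unfold PT
  simp only [Matrix.add_mul, Matrix.mul_add, Matrix.sub_mul, Matrix.mul_sub, Matrix.mul_assoc,
    hU', hV']
  abel

lemma PTperp_PT (hUo : Uᵀ * U = 1) (hVo : Vᵀ * V = 1) (Z : Matrix (Fin m) (Fin n) ℝ) :
    PTperp U V (PT U V Z) = 0 := by
  have hU' : ∀ {k : ℕ} (X : Matrix (Fin r) (Fin k) ℝ), Uᵀ * (U * X) = X := by
    intro k X; rw [← Matrix.mul_assoc, hUo, Matrix.one_mul]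
  have hV' : ∀ {k : ℕ} (X : Matrix (Fin r) (Fin k) ℝ), Vᵀ * (V * X) = X := by
    intro k X; rw [← Matrix.mul_assoc, hVo, Matrix.one_mul]
  unfold PT PTperp
  simp only [Matrix.add_mul, Matrix.mul_add, Matrix.sub_mul, Matrix.mul_sub, Matrix.one_mul,
    Matrix.mul_one, Matrix.mul_assoc, hU', hV']
  abel

lemma ip_PT_left (X Y : Matrix (Fin m) (Fin n) ℝ) :
    ip (PT U V X) Y = ip X (PT U V Y) := by
  have hP : (U * Uᵀ)ᵀ = U * Uᵀ := by rw [Matrix.transpose_mul, Matrix.transpose_transpose]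
  have hQ : (V * Vᵀ)ᵀ = V * Vᵀ := by rw [Matrix.transpose_mul, Matrix.transpose_transpose]
  unfold PT
  rw [ip_sub_left, ip_add_left, ip_sub_right, ip_add_right]
  rw [ip_mul_left, hP, ip_mul_right, hQ]
  rw [ip_mul_right, hQ, ip_mul_left, hP]
  simp only [Matrix.mul_assoc]

end PTlemmas

lemma trace_eq_sum_eigs {k : ℕ} {A : Matrix (Fin k) (Fin k) ℝ} (hA : A.IsHermitian) :
    A.trace = ∑ i, hA.eigenvalues i := by
  rw [hA.trace_eq_sum_eigenvalues]
  simp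

lemma nuclearNorm_nonneg (A : Matrix (Fin m) (Fin n) ℝ) : 0 ≤ nuclearNorm A :=
  Finset.sum_nonneg fun _ _ => Real.sqrt_nonneg _

lemma fro_le_nuclearNorm (A : Matrix (Fin m) (Fin n) ℝ) : fro A ≤ nuclearNorm A := by
  have hH := Matrix.isHermitian_conjTranspose_mul_self A
  have hpsd : (Aᵀ * A).PosSemidef := by
    have h := Matrix.posSemidef_conjTranspose_mul_self A
    simpa using h
  have heig : ∀ j, 0 ≤ hH.eigenvalues j := fun j => hpsd.eigenvalues_nonneg j
  have htr : ip A A = ∑ j, hH.eigenvalues j := by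
    rw [ip_eq_trace]; exact trace_eq_sum_eigs hH
  rw [fro, htr, nuclearNorm]
  have h1 : ∑ j, hH.eigenvalues j ≤ (∑ j, Real.sqrt (hH.eigenvalues j)) ^ 2 := by
    calc ∑ j, hH.eigenvalues j = ∑ j, (Real.sqrt (hH.eigenvalues j)) ^ 2 :=
          Finset.sum_congr rfl fun j _ => (Real.sq_sqrt (heig j)).symm
      _ ≤ (∑ j, Real.sqrt (hH.eigenvalues j)) ^ 2 := by
          apply Finset.sum_sq_le_sq_sum_of_nonneg
          intro j _; exact Real.sqrt_nonneg _
  calc Real.sqrt (∑ j, hH.eigenvalues j)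
      ≤ Real.sqrt ((∑ j, Real.sqrt (hH.eigenvalues j)) ^ 2) := Real.sqrt_le_sqrt h1
    _ = ∑ j, Real.sqrt (hH.eigenvalues j) :=
        Real.sqrt_sq (Finset.sum_nonneg fun _ _ => Real.sqrt_nonneg _)

lemma sqrt_sum_sq_add {ι : Type*} [Fintype ι] (a b : ι → ℝ) :
    Real.sqrt (∑ i, (a i + b i) ^ 2) ≤
      Real.sqrt (∑ i, a i ^ 2) + Real.sqrt (∑ i, b i ^ 2) := by
  have ha : (0:ℝ) ≤ ∑ i, a i ^ 2 := Finset.sum_nonneg fun _ _ => sq_nonneg _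
  have hb : (0:ℝ) ≤ ∑ i, b i ^ 2 := Finset.sum_nonneg fun _ _ => sq_nonneg _
  have hcs : ∑ i, a i * b i ≤ Real.sqrt (∑ i, a i ^ 2) * Real.sqrt (∑ i, b i ^ 2) :=
    Real.sum_mul_le_sqrt_mul_sqrt _ _ _
  have hexp : ∑ i, (a i + b i) ^ 2
      ≤ (Real.sqrt (∑ i, a i ^ 2) + Real.sqrt (∑ i, b i ^ 2)) ^ 2 := by
    have e1 : ∑ i, (a i + b i) ^ 2 = ∑ i, a i ^ 2 + 2 * ∑ i, a i * b i + ∑ i, b i ^ 2 := by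
      rw [Finset.mul_sum, ← Finset.sum_add_distrib, ← Finset.sum_add_distrib]
      exact Finset.sum_congr rfl fun i _ => by ring
    have e2 : (Real.sqrt (∑ i, a i ^ 2) + Real.sqrt (∑ i, b i ^ 2)) ^ 2
        = ∑ i, a i ^ 2 + 2 * (Real.sqrt (∑ i, a i ^ 2) * Real.sqrt (∑ i, b i ^ 2))
          + ∑ i, b i ^ 2 := by
      rw [add_sq, Real.sq_sqrt ha, Real.sq_sqrt hb]; ring
    rw [e1, e2]; linarith
  calc Real.sqrt (∑ i, (a i + b i) ^ 2)
      ≤ Real.sqrt ((Real.sqrt (∑ i, a i ^ 2) + Real.sqrt (∑ i, b i ^ 2)) ^ 2) :=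
        Real.sqrt_le_sqrt hexp
    _ = _ := Real.sqrt_sq (by positivity)


/-! ### Pure arithmetic helper lemmas -/

lemma arith_absorb (c q a w v : ℝ) (e1 : v = c * q - a ^ 2) (e2 : -(w * a) ≤ v)
    (e3 : w ≤ 1 / 2 * a) (hw : 0 ≤ w) (ha : 0 ≤ a) : a ^ 2 ≤ 2 * c * q := by
  nlinarith

lemma arith_qy (q fr fR κ : ℝ) (h : q ≤ fR * fr) (h2 : fR ≤ κ * fr) (hfr : 0 ≤ fr) :
    q ≤ κ * fr ^ 2 := by nlinarith

lemma arith_amgm (lam a sq Q u : ℝ) (hQ : sq ^ 2 = Q) (ha : a ^ 2 = u) :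
    lam * (a * sq) ≤ 1 / 2 * Q + lam ^ 2 * u / 2 := by
  nlinarith [sq_nonneg (lam * a - sq)]

lemma arith_main (lam Q N t F a sq k u G : ℝ) (hlam : 0 < lam) (hN : 0 ≤ N)
    (h1 : 1 / 2 * Q + lam / 2 * N ≤ lam * t * F + G)
    (hD : t * F ≤ a * (sq + k * N))
    (hamgm : lam * (a * sq) ≤ 1 / 2 * Q + lam ^ 2 * u / 2)
    (hq : a * k ≤ 1 / 4) : lam / 4 * N ≤ lam ^ 2 * u / 2 + G := by
  have h5 := mul_le_mul_of_nonneg_left hD hlam.le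
  have h6 := mul_le_mul_of_nonneg_right hq (mul_nonneg hlam.le hN)
  nlinarith [h5, h6, hamgm, h1]

lemma arith_quarter (L b u w : ℝ) (hL : (0.69:ℝ) ≤ L) (hb1 : 1 ≤ b) (hu : 0 ≤ u) (hw : 0 ≤ w)
    (hub : w ^ 2 = u * b ^ 2) (h4 : 8 * L / 3 * w ≤ 1 / 4) : u * (8 / 3 * b * L) ≤ 1 / 16 := by
  have hL0 : (0:ℝ) ≤ L := by linarith
  have hnn : (0:ℝ) ≤ 8 * L / 3 * w := mul_nonneg (by linarith) hw
  have hsq4 : (8 * L / 3 * w) ^ 2 ≤ (1 / 4 : ℝ) ^ 2 := by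
    apply pow_le_pow_left₀ hnn h4
  have t2' : (64 / 9 : ℝ) * L ^ 2 * (u * b ^ 2) ≤ 1 / 16 := by
    have e : (64 / 9 : ℝ) * L ^ 2 * (u * b ^ 2) = (8 * L / 3 * w) ^ 2 := by
      rw [← hub]; ring
    rw [e]; exact hsq4.trans_eq (by norm_num)
  have p1 : L * 1 ≤ L * b := mul_le_mul_of_nonneg_left hb1 hL0
  have h8 : (1:ℝ) ≤ 8 / 3 * L * b := by linarith
  have hint : (0:ℝ) ≤ u * L * b * (8 / 3 * L * b - 1) :=
    mul_nonneg (mul_nonneg (mul_nonneg hu hL0) (by linarith)) (by linarith)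
  nlinarith [t2', hint]

lemma arith_final (lam N mR nR rR sR ε G2 : ℝ)
    (hlam : 0 < lam) (hm1 : 1 ≤ mR) (hn2 : 2 ≤ nR) (hs1 : 1 ≤ sR) (hr0 : 0 ≤ rR)
    (hG : (1.38:ℝ) ≤ G2)
    (hmain : lam / 4 * N ≤ lam ^ 2 * (rR * mR / sR) / 2
        + (2 * sR * ε ^ 2 / (mR * nR) + 3 * mR * nR * rR * G2 * lam ^ 2 / (8 * sR))) :
    N ≤ 8 * sR * ε ^ 2 / (mR * nR * lam) + 3 * mR * nR * rR * G2 * lam / sR := by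
  have hs0 : (0:ℝ) < sR := by linarith
  have hm0 : (0:ℝ) < mR := by linarith
  have hn0 : (0:ℝ) < nR := by linarith
  have hc : (0:ℝ) < sR * mR * nR * (lam / 4) := by positivity
  apply le_of_mul_le_mul_left ?_ hc
  have hmul := mul_le_mul_of_nonneg_left hmain (by positivity : (0:ℝ) ≤ sR * mR * nR)
  have e1 : sR * mR * nR * (lam ^ 2 * (rR * mR / sR) / 2) = lam ^ 2 * rR * mR ^ 2 * nR / 2 := by
    field_simp
  have e2 : sR * mR * nR * (2 * sR * ε ^ 2 / (mR * nR)) = 2 * sR ^ 2 * ε ^ 2 := by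
    field_simp
  have e3 : sR * mR * nR * (3 * mR * nR * rR * G2 * lam ^ 2 / (8 * sR))
      = 3 * mR ^ 2 * nR ^ 2 * rR * G2 * lam ^ 2 / 8 := by
    field_simp
  have e4 : sR * mR * nR * (lam / 4) * (8 * sR * ε ^ 2 / (mR * nR * lam))
      = 2 * sR ^ 2 * ε ^ 2 := by
    field_simp; ring
  have e5 : sR * mR * nR * (lam / 4) * (3 * mR * nR * rR * G2 * lam / sR)
      = 3 * mR ^ 2 * nR ^ 2 * rR * G2 * lam ^ 2 / 4 := by
    field_simp
  have p1 : nR * 1.38 ≤ nR * G2 := mul_le_mul_of_nonneg_left hG (by linarith)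
  have h34 : (0:ℝ) ≤ 3 * nR * G2 - 4 := by nlinarith
  have hkey : (0:ℝ) ≤ rR * mR ^ 2 * nR * lam ^ 2 * (3 * nR * G2 - 4) :=
    mul_nonneg (mul_nonneg (mul_nonneg (mul_nonneg hr0 (sq_nonneg mR)) hn0.le)
      (sq_nonneg lam)) h34
  rw [mul_add, e4, e5]
  nlinarith [hmul, e1, e2, e3, hkey]

lemma q_eq (Ω : Multiset (Fin m × Fin n)) (Z : Matrix (Fin m) (Fin n) ℝ) :
    ip (RΩ Ω Z) Z = ∑ p : Fin m × Fin n, ((Ω.count p : ℝ).sqrt * Z p.1 p.2) ^ 2 := by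
  rw [ip_eq_sum_prod]
  refine Finset.sum_congr rfl fun p _ => ?_
  have : ((Ω.count p : ℝ).sqrt) ^ 2 = (Ω.count p : ℝ) :=
    Real.sq_sqrt (by positivity)
  simp only [RΩ, Matrix.of_apply]
  rw [mul_pow, this]
  ring_nf

lemma q_nonneg (Ω : Multiset (Fin m × Fin n)) (Z : Matrix (Fin m) (Fin n) ℝ) :
    0 ≤ ip (RΩ Ω Z) Z := by
  rw [q_eq]; exact Finset.sum_nonneg fun _ _ => sq_nonneg _

lemma q_sqrt_add (Ω : Multiset (Fin m × Fin n)) (X Y : Matrix (Fin m) (Fin n) ℝ) :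
    Real.sqrt (ip (RΩ Ω (X + Y)) (X + Y))
      ≤ Real.sqrt (ip (RΩ Ω X) X) + Real.sqrt (ip (RΩ Ω Y) Y) := by
  rw [q_eq, q_eq, q_eq]
  have h := sqrt_sum_sq_add (fun p : Fin m × Fin n => (Ω.count p : ℝ).sqrt * X p.1 p.2)
    (fun p : Fin m × Fin n => (Ω.count p : ℝ).sqrt * Y p.1 p.2)
  have e : ∀ p : Fin m × Fin n,
      ((Ω.count p : ℝ).sqrt * (X + Y) p.1 p.2) ^ 2
        = ((Ω.count p : ℝ).sqrt * X p.1 p.2 + (Ω.count p : ℝ).sqrt * Y p.1 p.2) ^ 2 := by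
    intro p; rw [Matrix.add_apply]; ring
  rw [Finset.sum_congr rfl fun p _ => e p]
  exact h

set_option maxHeartbeats 4000000 in
/-- deterministic bound on `‖P_{T⊥}(B_*)‖_*`, first half of the
proof of Theorem 1: under hypotheses (i)–(iv),
`‖P_{T⊥}(B)‖_F ≤ ‖P_{T⊥}(B)‖_* ≤ 8sε²/(mnλ) + 3mnr log(2n) λ/s`. -/
theorem stmt7 (m n r s : ℕ) (hm : 0 < m) (hmn : m ≤ n)
    (lam : ℝ) (hlam : 0 < lam) (ε : ℝ) (hε : 0 ≤ ε) (β : ℝ) (hβ : 1 < β)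
    (U : Matrix (Fin m) (Fin r) ℝ) (V : Matrix (Fin n) (Fin r) ℝ)
    (hUo : Uᵀ * U = 1) (hVo : Vᵀ * V = 1)
    (Ω : Multiset (Fin m × Fin n)) (hcard : Ω.card = s)
    (Ar : Matrix (Fin m) (Fin n) ℝ) (hArT : PT U V Ar = Ar)
    (B : Matrix (Fin m) (Fin n) ℝ)
    -- (i): the key inequality from Theorem 4
    (h1 : (1 / 2) * ip (RΩ Ω (Ar - B)) (Ar - B)
            + (lam / 2) * nuclearNorm (PTperp U V B)
          ≤ lam * Real.sqrt (r / (2 * n)) * fro (PT U V (Ar - B))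
            + (2 * s * ε ^ 2 / (m * n)
                + 3 * m * n * r * Real.log (2 * n) * lam ^ 2 / (8 * s)))
    -- (ii): `(mn/s)·P_T∘R_Ω∘P_T − P_T` has Frobenius operator norm at most `1/2`
    (h2 : ∀ Z : Matrix (Fin m) (Fin n) ℝ,
        fro (((m * n : ℝ) / s) • PT U V (RΩ Ω (PT U V Z)) - PT U V Z)
          ≤ (1 / 2) * fro Z)
    -- (iii): `R_Ω` has Frobenius operator norm at most `(8/3)·√β·log n`
    (h3 : ∀ Z : Matrix (Fin m) (Fin n) ℝ,
        fro (RΩ Ω Z) ≤ (8 / 3) * Real.sqrt β * Real.log n * fro Z)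
    -- (iv)
    (h4 : (8 * Real.log n / 3) * Real.sqrt (r * m * β / s) ≤ 1 / 4) :
    fro (PTperp U V B) ≤ nuclearNorm (PTperp U V B) ∧
    nuclearNorm (PTperp U V B)
      ≤ 8 * s * ε ^ 2 / (m * n * lam) + 3 * m * n * r * Real.log (2 * n) * lam / s := by
  have hn1 : 1 ≤ n := le_trans hm hmn
  have part1 := fro_le_nuclearNorm (PTperp U V B)
  refine ⟨part1, ?_⟩
  have hQ0 : 0 ≤ ip (RΩ Ω (Ar - B)) (Ar - B) := q_nonneg Ω _
  have hF0 : 0 ≤ fro (PT U V (Ar - B)) := fro_nonneg _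
  have hNF0 : 0 ≤ fro (PTperp U V B) := fro_nonneg _
  have hN0 : 0 ≤ nuclearNorm (PTperp U V B) := nuclearNorm_nonneg _
  have hPTX : PT U V (PT U V (Ar - B)) = PT U V (Ar - B) := PT_PT U V hUo hVo _
  have hA0 : PTperp U V Ar = 0 := by
    rw [← hArT]; exact PTperp_PT U V hUo hVo Ar
  have hperp : PTperp U V (Ar - B) = -(PTperp U V B) := by
    rw [PTperp_sub, hA0, zero_sub]
  have hXeq : PT U V (Ar - B) = (Ar - B) + PTperp U V B := by
    have hsum := PT_add_PTperp U V (Ar - B)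
    rw [hperp] at hsum
    calc PT U V (Ar - B) = PT U V (Ar - B) + -PTperp U V B + PTperp U V B := by abel
      _ = (Ar - B) + PTperp U V B := by rw [hsum]
  rcases Nat.eq_zero_or_pos s with hs | hs
  · -- degenerate case s = 0
    subst hs
    have h2X := h2 (PT U V (Ar - B))
    rw [hPTX] at h2X
    simp only [Nat.cast_zero, div_zero, zero_smul, zero_sub, fro_neg] at h2X
    have hFz : fro (PT U V (Ar - B)) = 0 := by linarith
    simp only [Nat.cast_zero, mul_zero, zero_mul, zero_div, div_zero, add_zero, zero_add,
      mul_zero] at h1 ⊢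
    rw [hFz, mul_zero] at h1
    have hNle : lam / 2 * nuclearNorm (PTperp U V B) ≤ lam / 2 * 0 := by
      rw [mul_zero]; linarith
    have := le_of_mul_le_mul_left hNle (by positivity : (0:ℝ) < lam / 2)
    linarith
  -- main case s ≥ 1
  have hs1 : (1:ℝ) ≤ (s:ℝ) := by exact_mod_cast hs
  have hm1 : (1:ℝ) ≤ (m:ℝ) := by exact_mod_cast hm
  have hn1' : (1:ℝ) ≤ (n:ℝ) := by exact_mod_cast hn1
  by_cases hn2 : 2 ≤ n
  case neg =>
    -- then n = 1 and s ≥ 1 : contradiction with h3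
    exfalso
    have hn : n = 1 := by omega
    subst hn
    have hΩne : Ω ≠ 0 := by
      intro h; rw [h] at hcard; simp at hcard; omega
    obtain ⟨p, hp⟩ := Multiset.exists_mem_of_ne_zero hΩne
    have hc1 : 1 ≤ Ω.count p := Multiset.one_le_count_iff_mem.mpr hp
    set Z : Matrix (Fin m) (Fin 1) ℝ :=
      Matrix.of (fun i j => if i = p.1 ∧ j = p.2 then (1:ℝ) else 0) with hZ
    have h3Z := h3 Z
    rw [Nat.cast_one, Real.log_one, mul_zero, zero_mul] at h3Z
    have hfz : fro (RΩ Ω Z) = 0 := le_antisymm h3Z (fro_nonneg _)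
    have hipz : ip (RΩ Ω Z) (RΩ Ω Z) = 0 := by
      have := congrArg (fun x => x ^ 2) hfz
      simpa [fro_sq] using this
    have hlow : ((Ω.count p : ℝ)) ^ 2 ≤ ip (RΩ Ω Z) (RΩ Ω Z) := by
      rw [ip_eq_sum_prod]
      have hterm : ((Ω.count p : ℝ)) ^ 2
          = (RΩ Ω Z) p.1 p.2 * (RΩ Ω Z) p.1 p.2 := by
        simp [RΩ, hZ, Prod.mk.eta]
        ring
      rw [hterm]
      exact Finset.single_le_sum (f := fun q : Fin m × Fin 1 =>
        (RΩ Ω Z) q.1 q.2 * (RΩ Ω Z) q.1 q.2)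
        (fun q _ => mul_self_nonneg _) (Finset.mem_univ p)
    have hcr : (1:ℝ) ≤ (Ω.count p : ℝ) := by exact_mod_cast hc1
    have hcr2 : (1:ℝ) ≤ ((Ω.count p : ℝ)) ^ 2 := by nlinarith
    linarith
  case pos =>
  have hn2' : (2:ℝ) ≤ (n:ℝ) := by exact_mod_cast hn2
  have hlog2 : (0.6931471803:ℝ) < Real.log 2 := Real.log_two_gt_d9
  have hlogn : Real.log 2 ≤ Real.log n := by
    apply Real.log_le_log (by norm_num)
    exact_mod_cast hn2'
  have hlogn0 : 0 < Real.log n := by linarith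
  -- abbreviations
  set X := PT U V (Ar - B) with hXdef
  set Y := PTperp U V B with hYdef
  set Q := ip (RΩ Ω (Ar - B)) (Ar - B) with hQdef
  set qX := ip (RΩ Ω X) X with hqXdef
  set qY := ip (RΩ Ω Y) Y with hqYdef
  have hqX0 : 0 ≤ qX := q_nonneg Ω X
  have hqY0 : 0 ≤ qY := q_nonneg Ω Y
  -- Step A
  have stepA : fro X ^ 2 ≤ 2 * ((m:ℝ) * n / s) * qX := by
    have h2X := h2 X
    rw [hPTX] at h2X
    set W := ((m * n : ℝ) / s) • PT U V (RΩ Ω X) - X with hW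
    have e1 : ip W X = ((m:ℝ) * n / s) * qX - fro X ^ 2 := by
      rw [hW, ip_sub_left, ip_smul_left, ip_PT_left U V, hPTX, ← fro_sq, hqXdef]
    have e2 : -(fro W * fro X) ≤ ip W X := by
      have h := ip_cauchy (-W) X
      rw [ip_neg_left, fro_neg] at h
      linarith
    have e3 : fro W ≤ 1 / 2 * fro X := h2X
    exact arith_absorb _ _ _ _ _ e1 e2 e3 (fro_nonneg W) hF0
  -- Step B
  have stepB : Real.sqrt qX ≤ Real.sqrt Q + Real.sqrt qY := by
    have h := q_sqrt_add Ω (Ar - B) Y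
    rw [hqXdef, hXeq, hQdef, hqYdef]
    exact h
  -- Step C
  set κ := (8:ℝ) / 3 * Real.sqrt β * Real.log n with hκdef
  have hκ0 : 0 ≤ κ := by
    rw [hκdef]
    exact mul_nonneg (mul_nonneg (by norm_num) (Real.sqrt_nonneg _)) hlogn0.le
  have hqY : qY ≤ κ * fro Y ^ 2 :=
    arith_qy _ _ _ _ (ip_cauchy (RΩ Ω Y) Y) (h3 Y) (fro_nonneg Y)
  have stepC : Real.sqrt qY ≤ Real.sqrt κ * fro Y := by
    calc Real.sqrt qY ≤ Real.sqrt (κ * fro Y ^ 2) := Real.sqrt_le_sqrt hqY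
      _ = Real.sqrt κ * fro Y := by
          rw [Real.sqrt_mul hκ0, Real.sqrt_sq (fro_nonneg Y)]
  -- Step D
  have hrm0 : (0:ℝ) ≤ (r:ℝ) * m / s := by positivity
  have stepD : Real.sqrt ((r:ℝ) / (2 * n)) * fro X
      ≤ Real.sqrt ((r:ℝ) * m / s) * (Real.sqrt Q + Real.sqrt κ * nuclearNorm Y) := by
    have hFbound : fro X ≤ Real.sqrt (2 * ((m:ℝ) * n / s)) * Real.sqrt qX := by
      calc fro X = Real.sqrt (fro X ^ 2) := (Real.sqrt_sq hF0).symm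
        _ ≤ Real.sqrt (2 * ((m:ℝ) * n / s) * qX) := Real.sqrt_le_sqrt stepA
        _ = Real.sqrt (2 * ((m:ℝ) * n / s)) * Real.sqrt qX := Real.sqrt_mul (by positivity) _
    have hkey : Real.sqrt ((r:ℝ) / (2 * n)) * Real.sqrt (2 * ((m:ℝ) * n / s))
        = Real.sqrt ((r:ℝ) * m / s) := by
      rw [← Real.sqrt_mul (by positivity)]
      congr 1
      field_simp
    have hchain : Real.sqrt ((r:ℝ) / (2 * n)) * fro X
        ≤ Real.sqrt ((r:ℝ) * m / s) * Real.sqrt qX := by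
      calc Real.sqrt ((r:ℝ) / (2 * n)) * fro X
          ≤ Real.sqrt ((r:ℝ) / (2 * n)) * (Real.sqrt (2 * ((m:ℝ) * n / s)) * Real.sqrt qX) :=
            mul_le_mul_of_nonneg_left hFbound (Real.sqrt_nonneg _)
        _ = Real.sqrt ((r:ℝ) / (2 * n)) * Real.sqrt (2 * ((m:ℝ) * n / s)) * Real.sqrt qX := by
            ring
        _ = Real.sqrt ((r:ℝ) * m / s) * Real.sqrt qX := by rw [hkey]
    have hsq : Real.sqrt qX ≤ Real.sqrt Q + Real.sqrt κ * nuclearNorm Y := by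
      have h5 : Real.sqrt κ * fro Y ≤ Real.sqrt κ * nuclearNorm Y :=
        mul_le_mul_of_nonneg_left part1 (Real.sqrt_nonneg _)
      linarith [stepB, stepC]
    calc Real.sqrt ((r:ℝ) / (2 * n)) * fro X
        ≤ Real.sqrt ((r:ℝ) * m / s) * Real.sqrt qX := hchain
      _ ≤ Real.sqrt ((r:ℝ) * m / s) * (Real.sqrt Q + Real.sqrt κ * nuclearNorm Y) :=
          mul_le_mul_of_nonneg_left hsq (Real.sqrt_nonneg _)
  -- Step E
  have hb1 : (1:ℝ) ≤ Real.sqrt β := by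
    have h := Real.sqrt_le_sqrt (show (1:ℝ) ≤ β by linarith)
    rwa [Real.sqrt_one] at h
  have hbound : (r:ℝ) * m / s * κ ≤ 1 / 16 := by
    rw [hκdef]
    have hβ0 : (0:ℝ) ≤ β := by linarith
    have hnum : (0:ℝ) ≤ (r:ℝ) * m * β / s :=
      div_nonneg (mul_nonneg (mul_nonneg (Nat.cast_nonneg r) (Nat.cast_nonneg m)) hβ0)
        (Nat.cast_nonneg s)
    have hub : (Real.sqrt ((r:ℝ) * m * β / s)) ^ 2 = ((r:ℝ) * m / s) * (Real.sqrt β) ^ 2 := by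
      rw [Real.sq_sqrt hnum, Real.sq_sqrt hβ0]
      ring
    have hL069 : (0.69:ℝ) ≤ Real.log n := by linarith
    exact arith_quarter (Real.log n) (Real.sqrt β) ((r:ℝ) * m / s)
      (Real.sqrt ((r:ℝ) * m * β / s)) hL069 hb1 hrm0 (Real.sqrt_nonneg _) hub h4
  have hquarter : Real.sqrt ((r:ℝ) * m / s) * Real.sqrt κ ≤ 1 / 4 := by
    rw [← Real.sqrt_mul hrm0]
    calc Real.sqrt ((r:ℝ) * m / s * κ) ≤ Real.sqrt (1 / 16) := Real.sqrt_le_sqrt hbound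
      _ = 1 / 4 := by
          rw [show (1:ℝ) / 16 = (1 / 4) ^ 2 by norm_num, Real.sqrt_sq (by norm_num)]
  have hamgm : lam * (Real.sqrt ((r:ℝ) * m / s) * Real.sqrt Q)
      ≤ 1 / 2 * Q + lam ^ 2 * ((r:ℝ) * m / s) / 2 :=
    arith_amgm lam _ _ _ _ (Real.sq_sqrt hQ0) (Real.sq_sqrt hrm0)
  -- Step F
  have hmain : lam / 4 * nuclearNorm Y
      ≤ lam ^ 2 * ((r:ℝ) * m / s) / 2
        + (2 * s * ε ^ 2 / ((m:ℝ) * n)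
            + 3 * m * n * r * Real.log (2 * n) * lam ^ 2 / (8 * s)) :=
    arith_main lam Q (nuclearNorm Y) (Real.sqrt ((r:ℝ) / (2 * n))) (fro X)
      (Real.sqrt ((r:ℝ) * m / s)) (Real.sqrt Q) (Real.sqrt κ) ((r:ℝ) * m / s) _
      hlam hN0 h1 stepD hamgm hquarter
  -- conclude
  clear_value X Y Q qX qY κ
  clear h1 h2 h3 h4 stepA stepB stepC stepD hamgm hquarter hbound hqY hqX0 hqY0 hQ0 hF0
    hNF0 part1 hPTX hA0 hperp hXeq hκ0 hb1 hrm0 hArT hcard hUo hVo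
  clear hκdef hQdef hqXdef hqYdef hXdef hYdef
  clear X Q qX qY U V Ar B Ω
  have hG : (1.38:ℝ) ≤ Real.log (2 * n) := by
    have h4n : (4:ℝ) ≤ 2 * n := by linarith
    have hll : Real.log 4 ≤ Real.log (2 * n) := Real.log_le_log (by norm_num) h4n
    have hl4 : Real.log 4 = 2 * Real.log 2 := by
      rw [show (4:ℝ) = 2 ^ 2 by norm_num, Real.log_pow]; push_cast; ring
    nlinarith
  exact arith_final lam (nuclearNorm Y) m n r s ε (Real.log (2 * n))
    hlam hm1 hn2' hs1 (Nat.cast_nonneg r) hG hmain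

end MC
end

section
/- (Deterministic derivation of inequality (a-4).) Let p, q be positive integers, let Ω_1, …, Ω_p be finite multisets of index pairs from [m]×[n] each of cardinality q, and let Ω be their (multiset) union, so |Ω| = pq. Let r > 0 and let W_0, W_1, …, W_{p−1} ∈ ℝ^{m×n} satisfy (mn/q)·⟨R_{Ω_j}(W_{j−1}), W_{j−1}⟩ ≤ (3r/2)·4^{−j} for each j = 1, …, p. Define Y = (mn/q)·Σ_{j=1}^p R_{Ω_j}(W_{j−1}). Then for every A ∈ ℝ^{m×n}, |⟨Y, A⟩| ≤ √(m n p r/(2|Ω|)) · √(⟨R_Ω(A), A⟩) = √(m n r/(2q)) · √(⟨R_Ω(A), A⟩). -/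
open scoped BigOperators
open Matrix
open MeasureTheory

namespace MC

variable {m n r s : ℕ}

/-- deterministic derivation of inequality (a-4): with `Ω` the
multiset union of `p` batches `Ω_1, …, Ω_p` of size `q`, matrices
`W_0, …, W_{p−1}` satisfying `(mn/q)⟨R_{Ω_j}(W_{j−1}), W_{j−1}⟩ ≤ (3r/2)4^{−j}`,
and `Y = (mn/q)·Σ_j R_{Ω_j}(W_{j−1})`, one has for every `A`
`|⟨Y, A⟩| ≤ √(mnpr/(2|Ω|))·√⟨R_Ω(A), A⟩ = √(mnr/(2q))·√⟨R_Ω(A), A⟩`.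
(Here `W j` plays the role of `W_{j−1}` and the batch `Ωs j` of `Ω_{j+1}`,
for `j = 0, …, p−1`.) -/
theorem stmt11 (m n : ℕ) (hm : 0 < m) (hmn : m ≤ n)
    (p q : ℕ) (hp : 0 < p) (hq : 0 < q)
    (Ωs : Fin p → Multiset (Fin m × Fin n)) (hcard : ∀ j, (Ωs j).card = q)
    (r : ℝ) (hr : 0 < r)
    (W : Fin p → Matrix (Fin m) (Fin n) ℝ)
    (hW : ∀ j : Fin p,
        ((m : ℝ) * n / q) * ip (RΩ (Ωs j) (W j)) (W j)
          ≤ (3 * r / 2) * ((1 : ℝ) / 4) ^ ((j : ℕ) + 1))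
    (Y : Matrix (Fin m) (Fin n) ℝ)
    (hY : Y = ((m : ℝ) * n / q) • ∑ j, RΩ (Ωs j) (W j))
    (Ω : Multiset (Fin m × Fin n)) (hΩ : Ω = ∑ j, Ωs j) :
    (∀ A : Matrix (Fin m) (Fin n) ℝ,
        |ip Y A| ≤ Real.sqrt ((m : ℝ) * n * p * r / (2 * (p * q))) *
          Real.sqrt (ip (RΩ Ω A) A)) ∧
    Real.sqrt ((m : ℝ) * n * p * r / (2 * (p * q)))
      = Real.sqrt ((m : ℝ) * n * r / (2 * q)) := by
  have hn : 0 < n := lt_of_lt_of_le hm hmn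
  have hq' : (0:ℝ) < q := by exact_mod_cast hq
  have hmn0 : (0:ℝ) < (m:ℝ) * n := by positivity
  have hratio : (0:ℝ) < (m:ℝ) * n / q := by positivity
  have hp' : (0:ℝ) < p := by exact_mod_cast hp
  -- second conjunct
  have heq : Real.sqrt ((m : ℝ) * n * p * r / (2 * (p * q)))
      = Real.sqrt ((m : ℝ) * n * r / (2 * q)) := by
    congr 1
    field_simp
  refine ⟨?_, heq⟩
  intro A
  rw [heq]
  set c : Fin p → Fin m → Fin n → ℝ := fun j i k => ((Ωs j).count (i, k) : ℝ) with hc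
  have hc0 : ∀ j i k, (0:ℝ) ≤ c j i k := fun j i k => Nat.cast_nonneg _
  set f : Fin p × Fin m × Fin n → ℝ :=
    fun x => Real.sqrt (c x.1 x.2.1 x.2.2) * W x.1 x.2.1 x.2.2 with hf
  set g : Fin p × Fin m × Fin n → ℝ :=
    fun x => Real.sqrt (c x.1 x.2.1 x.2.2) * A x.2.1 x.2.2 with hg
  have hswap : ∀ F : Fin p → Fin m → Fin n → ℝ,
      ∑ j, ∑ i, ∑ k, F j i k = ∑ i, ∑ k, ∑ j, F j i k := by
    intro F
    rw [Finset.sum_comm]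
    exact Finset.sum_congr rfl fun i _ => Finset.sum_comm
  have hfg : ∀ x : Fin p × Fin m × Fin n,
      f x * g x = c x.1 x.2.1 x.2.2 * W x.1 x.2.1 x.2.2 * A x.2.1 x.2.2 := by
    intro x
    simp only [hf, hg]
    rw [show Real.sqrt (c x.1 x.2.1 x.2.2) * W x.1 x.2.1 x.2.2 *
        (Real.sqrt (c x.1 x.2.1 x.2.2) * A x.2.1 x.2.2)
      = (Real.sqrt (c x.1 x.2.1 x.2.2) * Real.sqrt (c x.1 x.2.1 x.2.2)) *
        W x.1 x.2.1 x.2.2 * A x.2.1 x.2.2 from by ring,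
      Real.mul_self_sqrt (hc0 _ _ _)]
  have hf2 : ∀ x : Fin p × Fin m × Fin n,
      f x ^ 2 = c x.1 x.2.1 x.2.2 * W x.1 x.2.1 x.2.2 ^ 2 := by
    intro x
    simp only [hf, mul_pow, Real.sq_sqrt (hc0 _ _ _)]
  have hg2 : ∀ x : Fin p × Fin m × Fin n,
      g x ^ 2 = c x.1 x.2.1 x.2.2 * A x.2.1 x.2.2 ^ 2 := by
    intro x
    simp only [hg, mul_pow, Real.sq_sqrt (hc0 _ _ _)]
  -- ip Y A in terms of f, g
  have hip : ip Y A = ((m : ℝ) * n / q) * ∑ x : Fin p × Fin m × Fin n, f x * g x := by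
    subst hY
    simp only [ip, Matrix.smul_apply, Matrix.sum_apply, smul_eq_mul, RΩ, Matrix.of_apply]
    rw [Fintype.sum_prod_type]
    simp only [Fintype.sum_prod_type, hfg]
    rw [hswap fun j i k => c j i k * W j i k * A i k]
    simp only [Finset.mul_sum, Finset.sum_mul]
    refine Finset.sum_congr rfl fun i _ => ?_
    refine Finset.sum_congr rfl fun k _ => ?_
    refine Finset.sum_congr rfl fun j _ => ?_
    simp only [hc]
    ring
  -- sum of f^2 equals sum of batch quadratic forms
  have hF2 : ∑ x : Fin p × Fin m × Fin n, f x ^ 2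
      = ∑ j, ip (RΩ (Ωs j) (W j)) (W j) := by
    rw [Fintype.sum_prod_type]
    simp only [Fintype.sum_prod_type, hf2, ip, RΩ, Matrix.of_apply]
    refine Finset.sum_congr rfl fun j _ => ?_
    refine Finset.sum_congr rfl fun i _ => ?_
    refine Finset.sum_congr rfl fun k _ => ?_
    simp only [hc]
    ring
  -- sum of g^2 equals the quadratic form at A
  have hG2 : ∑ x : Fin p × Fin m × Fin n, g x ^ 2 = ip (RΩ Ω A) A := by
    subst hΩ
    rw [Fintype.sum_prod_type]
    simp only [Fintype.sum_prod_type, hg2, ip, RΩ, Matrix.of_apply]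
    rw [hswap fun j i k => c j i k * A i k ^ 2]
    refine Finset.sum_congr rfl fun i _ => ?_
    refine Finset.sum_congr rfl fun k _ => ?_
    rw [Multiset.count_sum', Nat.cast_sum, Finset.sum_mul, Finset.sum_mul]
    refine Finset.sum_congr rfl fun j _ => ?_
    simp only [hc]
    ring
  -- geometric sum bound
  have hgeom : ∑ j : Fin p, ((1:ℝ)/4) ^ ((j:ℕ) + 1) ≤ 1/3 := by
    rw [Fin.sum_univ_eq_sum_range (fun j => ((1:ℝ)/4) ^ (j + 1))]
    have : ∑ j ∈ Finset.range p, ((1:ℝ)/4) ^ (j + 1)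
        = (1/4) * ∑ j ∈ Finset.range p, ((1:ℝ)/4) ^ j := by
      rw [Finset.mul_sum]
      exact Finset.sum_congr rfl fun j _ => by ring
    rw [this, geom_sum_eq (by norm_num)]
    have h4 : (0:ℝ) ≤ (1/4:ℝ) ^ p := by positivity
    have h5 : (((1/4:ℝ)) ^ p - 1) / ((1/4:ℝ) - 1) = (1 - (1/4:ℝ) ^ p) * (4/3) := by ring
    rw [h5]
    nlinarith
  -- bound on sum of f^2
  have hsumW : ∑ x : Fin p × Fin m × Fin n, f x ^ 2 ≤ q * r / (2 * ((m:ℝ) * n)) := by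
    rw [hF2]
    have h1 : ∀ j : Fin p, ip (RΩ (Ωs j) (W j)) (W j)
        ≤ (q / ((m:ℝ) * n)) * ((3 * r / 2) * ((1:ℝ)/4) ^ ((j:ℕ) + 1)) := by
      intro j
      have := hW j
      rw [div_mul_eq_mul_div, le_div_iff₀ hmn0]
      calc ip (RΩ (Ωs j) (W j)) (W j) * ((m:ℝ) * n)
          = (((m : ℝ) * n / q) * ip (RΩ (Ωs j) (W j)) (W j)) * q := by
            field_simp
        _ ≤ ((3 * r / 2) * ((1:ℝ)/4) ^ ((j:ℕ) + 1)) * q := by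
            apply mul_le_mul_of_nonneg_right this (le_of_lt hq')
        _ = q * ((3 * r / 2) * ((1:ℝ)/4) ^ ((j:ℕ) + 1)) := by ring
    calc ∑ j, ip (RΩ (Ωs j) (W j)) (W j)
        ≤ ∑ j : Fin p, (q / ((m:ℝ) * n)) * ((3 * r / 2) * ((1:ℝ)/4) ^ ((j:ℕ) + 1)) :=
          Finset.sum_le_sum fun j _ => h1 j
      _ = (q / ((m:ℝ) * n)) * (3 * r / 2) * ∑ j : Fin p, ((1:ℝ)/4) ^ ((j:ℕ) + 1) := by
          rw [Finset.mul_sum]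
          exact Finset.sum_congr rfl fun j _ => by ring
      _ ≤ (q / ((m:ℝ) * n)) * (3 * r / 2) * (1/3) := by
          apply mul_le_mul_of_nonneg_left hgeom
          positivity
      _ = q * r / (2 * ((m:ℝ) * n)) := by field_simp
  -- Cauchy-Schwarz
  have hcs : (∑ x : Fin p × Fin m × Fin n, f x * g x) ^ 2
      ≤ (∑ x, f x ^ 2) * ∑ x, g x ^ 2 :=
    Finset.sum_mul_sq_le_sq_mul_sq _ _ _
  have hgnn : (0:ℝ) ≤ ∑ x : Fin p × Fin m × Fin n, g x ^ 2 :=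
    Finset.sum_nonneg fun x _ => sq_nonneg _
  have habs : |∑ x : Fin p × Fin m × Fin n, f x * g x|
      ≤ Real.sqrt (q * r / (2 * ((m:ℝ) * n))) * Real.sqrt (ip (RΩ Ω A) A) := by
    rw [← Real.sqrt_sq_eq_abs, ← hG2,
      ← Real.sqrt_mul (by positivity : (0:ℝ) ≤ q * r / (2 * ((m:ℝ) * n)))]
    apply Real.sqrt_le_sqrt
    calc (∑ x : Fin p × Fin m × Fin n, f x * g x) ^ 2
        ≤ (∑ x, f x ^ 2) * ∑ x, g x ^ 2 := hcs
      _ ≤ (q * r / (2 * ((m:ℝ) * n))) * ∑ x, g x ^ 2 :=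
          mul_le_mul_of_nonneg_right hsumW hgnn
  have hconst : ((m:ℝ) * n / q) * Real.sqrt (q * r / (2 * ((m:ℝ) * n)))
      = Real.sqrt ((m:ℝ) * n * r / (2 * q)) := by
    rw [← Real.sqrt_sq (le_of_lt hratio),
      ← Real.sqrt_mul (by positivity : (0:ℝ) ≤ ((m:ℝ) * n / q) ^ 2)]
    congr 1
    field_simp
  calc |ip Y A| = ((m:ℝ) * n / q) * |∑ x : Fin p × Fin m × Fin n, f x * g x| := by
        rw [hip, abs_mul, abs_of_pos hratio]
    _ ≤ ((m:ℝ) * n / q) *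
        (Real.sqrt (q * r / (2 * ((m:ℝ) * n))) * Real.sqrt (ip (RΩ Ω A) A)) :=
        mul_le_mul_of_nonneg_left habs (le_of_lt hratio)
    _ = Real.sqrt ((m:ℝ) * n * r / (2 * q)) * Real.sqrt (ip (RΩ Ω A) A) := by
        rw [← mul_assoc, hconst]

end MC
end

section
/- (Subgradient construction, identity (eqn:2).) For every B ∈ ℝ^{m×n} there exists a matrix W ∈ ℝ^{m×n} with UᵀW = 0, WV = 0, and ‖W‖ ≤ 1, such that ⟨B, W⟩ = ‖P_{T⊥}(B)‖_*. Consequently, for any A_r ∈ ℝ^{m×n} with P_T(A_r) = A_r, one has ⟨B − A_r, UVᵀ + W⟩ = ⟨B − A_r, UVᵀ⟩ + ‖P_{T⊥}(B)‖_*. -/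
open scoped BigOperators
open Matrix
open MeasureTheory

namespace MC

variable {m n r s : ℕ}

lemma conjT_eq {α β : Type*} [Fintype α] [Fintype β] (M : Matrix α β ℝ) : Mᴴ = Mᵀ := by
  ext i j; simp [Matrix.conjTranspose_apply]

/-- subgradient construction, identity (eqn:2): for every `B`
there exists `W` with `UᵀW = 0`, `WV = 0`, `‖W‖ ≤ 1` and
`⟨B, W⟩ = ‖P_{T⊥}(B)‖_*`; consequently, for any `A_r` with `P_T(A_r) = A_r`,
`⟨B − A_r, UVᵀ + W⟩ = ⟨B − A_r, UVᵀ⟩ + ‖P_{T⊥}(B)‖_*`. -/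
theorem stmt15 (m n r : ℕ) (hm : 0 < m) (hmn : m ≤ n)
    (U : Matrix (Fin m) (Fin r) ℝ) (V : Matrix (Fin n) (Fin r) ℝ)
    (hUo : Uᵀ * U = 1) (hVo : Vᵀ * V = 1)
    (B : Matrix (Fin m) (Fin n) ℝ) :
    ∃ W : Matrix (Fin m) (Fin n) ℝ,
      Uᵀ * W = 0 ∧ W * V = 0 ∧ specNorm W ≤ 1 ∧
      ip B W = nuclearNorm (PTperp U V B) ∧
      ∀ Ar : Matrix (Fin m) (Fin n) ℝ, PT U V Ar = Ar →
        ip (B - Ar) (U * Vᵀ + W) = ip (B - Ar) (U * Vᵀ) + nuclearNorm (PTperp U V B) := by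
  classical
  haveI : Nonempty (Fin n) := ⟨⟨0, lt_of_lt_of_le hm hmn⟩⟩
  set C : Matrix (Fin m) (Fin n) ℝ := PTperp U V B with hCdef
  have hH : (Cᵀ * C).IsHermitian := Matrix.isHermitian_conjTranspose_mul_self C
  set lam : Fin n → ℝ := hH.eigenvalues with hlamdef
  set E : Matrix (Fin n) (Fin n) ℝ := (hH.eigenvectorUnitary : Matrix (Fin n) (Fin n) ℝ)
    with hEdef
  have hstarE : star E = Eᵀ := by
    rw [Matrix.star_eq_conjTranspose, conjT_eq]
  have hEEt : E * Eᵀ = 1 := by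
    have := (Matrix.mem_unitaryGroup_iff).mp hH.eigenvectorUnitary.2
    rwa [hstarE] at this
  have hEtE : Eᵀ * E = 1 := by
    have := (Matrix.mem_unitaryGroup_iff').mp hH.eigenvectorUnitary.2
    rwa [hstarE] at this
  have hspec : Cᵀ * C = E * Matrix.diagonal lam * Eᵀ := by
    have := hH.spectral_theorem
    rwa [Unitary.conjStarAlgAut_apply, ← hEdef, hstarE, RCLike.ofReal_real_eq_id,
      Function.id_comp] at this
  have hlam0 : ∀ j, 0 ≤ lam j := by
    intro j
    have h1 : Cᴴ = Cᵀ := conjT_eq C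
    have hP : (Cᵀ * C).PosSemidef := h1 ▸ Matrix.posSemidef_conjTranspose_mul_self C
    exact hP.eigenvalues_nonneg j
  set g : ℝ → ℝ := fun t => if t = 0 then 0 else (Real.sqrt t)⁻¹ with hgdef
  set G : Matrix (Fin n) (Fin n) ℝ := E * Matrix.diagonal (fun j => g (lam j)) * Eᵀ with hGdef
  set W : Matrix (Fin m) (Fin n) ℝ := C * G with hWdef
  have hE3 : ∀ X : Matrix (Fin n) (Fin n) ℝ, Eᵀ * (E * X) = X := by
    intro X; rw [← Matrix.mul_assoc, hEtE, Matrix.one_mul]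
  have hDD : ∀ (a b : Fin n → ℝ) (X : Matrix (Fin n) (Fin n) ℝ),
      Matrix.diagonal a * (Matrix.diagonal b * X) = Matrix.diagonal (fun j => a j * b j) * X := by
    intro a b X; rw [← Matrix.mul_assoc, Matrix.diagonal_mul_diagonal]
  -- U ᵀ C = 0
  have hUC : Uᵀ * C = 0 := by
    have h1 : Uᵀ * (1 - U * Uᵀ) = 0 := by
      rw [Matrix.mul_sub, Matrix.mul_one, ← Matrix.mul_assoc, hUo, Matrix.one_mul, sub_self]
    rw [hCdef]
    show Uᵀ * ((1 - U * Uᵀ) * B * (1 - V * Vᵀ)) = 0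
    rw [← Matrix.mul_assoc, ← Matrix.mul_assoc, h1, Matrix.zero_mul, Matrix.zero_mul]
  have hUW : Uᵀ * W = 0 := by
    rw [hWdef, ← Matrix.mul_assoc, hUC, Matrix.zero_mul]
  -- C V = 0
  have hCV : C * V = 0 := by
    have h1 : (1 - V * Vᵀ) * V = 0 := by
      rw [Matrix.sub_mul, Matrix.one_mul, Matrix.mul_assoc, hVo, Matrix.mul_one, sub_self]
    rw [hCdef]
    show (1 - U * Uᵀ) * B * (1 - V * Vᵀ) * V = 0
    rw [Matrix.mul_assoc, h1, Matrix.mul_zero]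
  -- W V = 0
  have hHV : (Cᵀ * C) * V = 0 := by
    rw [Matrix.mul_assoc, hCV, Matrix.mul_zero]
  have hDV : Matrix.diagonal lam * (Eᵀ * V) = 0 := by
    have h1 : Eᵀ * (Cᵀ * C) = Matrix.diagonal lam * Eᵀ := by
      rw [hspec, ← Matrix.mul_assoc, ← Matrix.mul_assoc, hEtE, Matrix.one_mul]
    calc Matrix.diagonal lam * (Eᵀ * V) = (Matrix.diagonal lam * Eᵀ) * V := by
          rw [Matrix.mul_assoc]
      _ = Eᵀ * ((Cᵀ * C) * V) := by rw [← h1, Matrix.mul_assoc]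
      _ = 0 := by rw [hHV, Matrix.mul_zero]
  have hgDV : Matrix.diagonal (fun j => g (lam j)) * (Eᵀ * V) = 0 := by
    ext j k
    have h1 : lam j * (Eᵀ * V) j k = 0 := by
      have := congrFun (congrFun hDV j) k
      simpa [Matrix.diagonal_mul] using this
    by_cases hz : lam j = 0
    · simp [Matrix.diagonal_mul, hgdef, hz]
    · have : (Eᵀ * V) j k = 0 := by
        rcases mul_eq_zero.mp h1 with h | h
        · exact absurd h hz
        · exact h
      simp [Matrix.diagonal_mul, this]
  have hWV : W * V = 0 := by
    rw [hWdef, hGdef]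
    simp only [Matrix.mul_assoc]
    rw [hgDV, Matrix.mul_zero, Matrix.mul_zero]
  -- ip of anything in range of PT with W is zero
  have hPW : (U * Uᵀ) * W = 0 := by
    rw [Matrix.mul_assoc, hUW, Matrix.mul_zero]
  have hWQ : W * (V * Vᵀ) = 0 := by
    rw [← Matrix.mul_assoc, hWV, Matrix.zero_mul]
  have hipT : ∀ A : Matrix (Fin m) (Fin n) ℝ, ip (PT U V A) W = 0 := by
    intro A
    have t1 : ip ((U * Uᵀ) * A) W = 0 := by
      rw [ip_eq_trace, Matrix.transpose_mul, Matrix.transpose_mul, Matrix.transpose_transpose,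
        Matrix.mul_assoc, Matrix.mul_assoc, ← Matrix.mul_assoc U, hPW]
      simp
    have hVsymm : (V * Vᵀ)ᵀ = V * Vᵀ := by
      rw [Matrix.transpose_mul, Matrix.transpose_transpose]
    have t2 : ip (A * (V * Vᵀ)) W = 0 := by
      rw [ip_eq_trace, Matrix.transpose_mul, hVsymm, Matrix.mul_assoc,
        Matrix.trace_mul_comm, Matrix.mul_assoc Aᵀ W (V * Vᵀ), hWQ,
        Matrix.mul_zero, Matrix.trace_zero]
    have t3 : ip ((U * Uᵀ) * A * (V * Vᵀ)) W = 0 := by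
      rw [ip_eq_trace, Matrix.transpose_mul, hVsymm, Matrix.mul_assoc,
        Matrix.trace_mul_comm, Matrix.mul_assoc ((U * Uᵀ) * A)ᵀ W (V * Vᵀ), hWQ,
        Matrix.mul_zero, Matrix.trace_zero]
    have : PT U V A = (U * Uᵀ) * A + A * (V * Vᵀ) - (U * Uᵀ) * A * (V * Vᵀ) := rfl
    rw [this, ip_sub_left, ip_add_left, t1, t2, t3]
    ring
  -- the decomposition B = PT B + C
  have hdecomp : B = PT U V B + C := by
    rw [hCdef]
    show B = PT U V B + PTperp U V B
    simp only [PT, PTperp, Matrix.sub_mul, Matrix.mul_sub, Matrix.one_mul, Matrix.mul_one]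
    abel
  -- ip C W
  have hipCW : ip C W = ∑ j, Real.sqrt (lam j) := by
    rw [ip_eq_trace, hWdef, ← Matrix.mul_assoc, hspec, hGdef]
    simp only [Matrix.mul_assoc]
    rw [hE3, hDD, Matrix.trace_mul_comm, Matrix.mul_assoc, hEtE, Matrix.mul_one,
      Matrix.trace_diagonal]
    apply Finset.sum_congr rfl
    intro j _
    by_cases hz : lam j = 0
    · simp [hz]
    · have hpos : 0 < lam j := lt_of_le_of_ne (hlam0 j) (Ne.symm hz)
      have hs : Real.sqrt (lam j) ≠ 0 := by positivity
      rw [hgdef]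
      simp only [hz, if_false]
      field_simp
      rw [Real.sq_sqrt (hlam0 j)]
  have hipBW : ip B W = ∑ j, Real.sqrt (lam j) := by
    conv_lhs => rw [hdecomp]
    rw [ip_add_left, hipT, hipCW, zero_add]
  have hnn : nuclearNorm C = ∑ j, Real.sqrt (lam j) := rfl
  -- spectral norm bound
  have hWW : Wᵀ * W = E * Matrix.diagonal (fun j => g (lam j) ^ 2 * lam j) * Eᵀ := by
    rw [hWdef, Matrix.transpose_mul, hGdef]
    have hGT : (E * Matrix.diagonal (fun j => g (lam j)) * Eᵀ)ᵀ
        = E * Matrix.diagonal (fun j => g (lam j)) * Eᵀ := by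
      rw [Matrix.transpose_mul, Matrix.transpose_mul, Matrix.transpose_transpose,
        Matrix.diagonal_transpose, Matrix.mul_assoc]
    rw [hGT]
    have hCC : ∀ X : Matrix (Fin n) (Fin n) ℝ,
        Cᵀ * (C * X) = E * (Matrix.diagonal lam * (Eᵀ * X)) := by
      intro X; rw [← Matrix.mul_assoc, hspec]; simp only [Matrix.mul_assoc]
    simp only [Matrix.mul_assoc]
    rw [hCC, hE3, hE3, hDD, hDD]
    congr 2
    funext j
    ring
  have hmu_le : ∀ j, g (lam j) ^ 2 * lam j ≤ 1 := by
    intro j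
    by_cases hz : lam j = 0
    · simp [hz]
    · have hpos : 0 < lam j := lt_of_le_of_ne (hlam0 j) (Ne.symm hz)
      rw [hgdef]
      simp only [hz, if_false]
      rw [inv_pow, Real.sq_sqrt (hlam0 j), inv_mul_cancel₀ hz]
  have hspecW : specNorm W ≤ 1 := by
    rw [specNorm]
    apply ciSup_le
    intro j
    have hW2 : (Wᵀ * W).IsHermitian := Matrix.isHermitian_conjTranspose_mul_self W
    have hev : (Matrix.isHermitian_conjTranspose_mul_self W).eigenvalues j ≤ 1 := by
      set ev := (Matrix.isHermitian_conjTranspose_mul_self W).eigenvalues j with hevdef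
      set v : Fin n → ℝ := ⇑(hW2.eigenvectorBasis j) with hvdef
      have hmv : (Wᵀ * W) *ᵥ v = ev • v := hW2.mulVec_eigenvectorBasis j
      have hvne : v ≠ 0 := by
        intro h0
        have := hW2.eigenvectorBasis.orthonormal.ne_zero j
        apply this
        ext k
        exact congrFun h0 k
      set w : Fin n → ℝ := Eᵀ *ᵥ v with hwdef
      have hwe : Matrix.diagonal (fun j => g (lam j) ^ 2 * lam j) *ᵥ w = ev • w := by
        have h1 : Eᵀ *ᵥ ((Wᵀ * W) *ᵥ v) = Eᵀ *ᵥ (ev • v) := by rw [hmv]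
        rw [Matrix.mulVec_smul] at h1
        rw [Matrix.mulVec_mulVec, hWW] at h1
        rw [show Eᵀ * (E * Matrix.diagonal (fun j => g (lam j) ^ 2 * lam j) * Eᵀ)
            = Matrix.diagonal (fun j => g (lam j) ^ 2 * lam j) * Eᵀ by
          simp only [Matrix.mul_assoc]; rw [hE3]] at h1
        rw [hwdef, Matrix.mulVec_mulVec]
        exact h1
      have hwne : w ≠ 0 := by
        intro h0
        apply hvne
        have : E *ᵥ w = E *ᵥ (0 : Fin n → ℝ) := by rw [h0]
        rw [hwdef, Matrix.mulVec_mulVec, hEEt, Matrix.one_mulVec, Matrix.mulVec_zero] at this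
        exact this
      obtain ⟨k, hk⟩ := Function.ne_iff.mp hwne
      have h2 : g (lam k) ^ 2 * lam k * w k = ev * w k := by
        have := congrFun hwe k
        simpa [Matrix.mulVec_diagonal] using this
      have h3 : ev = g (lam k) ^ 2 * lam k := by
        rcases mul_eq_mul_right_iff.mp h2 with h | h
        · exact h.symm
        · exact absurd h hk
      rw [h3]
      exact hmu_le k
    calc Real.sqrt ((Matrix.isHermitian_conjTranspose_mul_self W).eigenvalues j)
        ≤ Real.sqrt 1 := Real.sqrt_le_sqrt hev
      _ = 1 := Real.sqrt_one
  refine ⟨W, hUW, hWV, hspecW, by rw [hipBW, hnn], ?_⟩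
  intro Ar hAr
  have hipAr : ip Ar W = 0 := by rw [← hAr]; exact hipT Ar
  rw [ip_add_right, ip_sub_left, ip_sub_left, hipAr, sub_zero, hipBW, hnn]

end MC
end
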